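/- Let B be a d×d real matrix all of whose eigenvalues have real part ≥ ρ, and suppose some eigenvalue λ with Re(λ) = ρ has a Jordan block of size N. Let μ be a probability measure on ℝ^d with finite nonzero second moment not concentrated on any hyperplane. Then there exist c > 0 and a vector u such that ∫|xᵀe^{−tBᵀ}u|² dμ(x) ≥ (1/c)(1 + t^{2(N−1)})e^{−2ρt} for all t ≥ 0. -/

import Mathlib

open NormedSpace MeasureTheory
open scoped Matrix

set_option linter.unusedSectionVars false
set_option maxHeartbeats 1000000

variable {d : ℕ}


-- exp as a tsum for matrices
lemma matexp_eq_tsum (M : Matrix (Fin d) (Fin d) ℂ) :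
    exp M = ∑' k : ℕ, ((k.factorial : ℂ))⁻¹ • M ^ k := by
  letI : SeminormedRing (Matrix (Fin d) (Fin d) ℂ) := Matrix.linftyOpSemiNormedRing
  letI : NormedRing (Matrix (Fin d) (Fin d) ℂ) := Matrix.linftyOpNormedRing
  letI : NormedAlgebra ℂ (Matrix (Fin d) (Fin d) ℂ) := Matrix.linftyOpNormedAlgebra
  exact congrFun (exp_eq_tsum (𝕂 := ℂ)) M

lemma matexp_summable (M : Matrix (Fin d) (Fin d) ℂ) :
    Summable fun k : ℕ => ((k.factorial : ℂ))⁻¹ • M ^ k := by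
  letI : SeminormedRing (Matrix (Fin d) (Fin d) ℂ) := Matrix.linftyOpSemiNormedRing
  letI : NormedRing (Matrix (Fin d) (Fin d) ℂ) := Matrix.linftyOpNormedRing
  letI : NormedAlgebra ℂ (Matrix (Fin d) (Fin d) ℂ) := Matrix.linftyOpNormedAlgebra
  exact expSeries_summable' (𝕂 := ℂ) M

/-- mulVec by `u` as a linear map in the matrix argument. -/
noncomputable def mulVecL (u : Fin d → ℂ) :
    Matrix (Fin d) (Fin d) ℂ →ₗ[ℂ] (Fin d → ℂ) where
  toFun M := M.mulVec u
  map_add' A B := Matrix.add_mulVec A B u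
  map_smul' c A := Matrix.smul_mulVec c A u

lemma matexp_mulVec (M : Matrix (Fin d) (Fin d) ℂ) (u : Fin d → ℂ) :
    (exp M).mulVec u = ∑' k : ℕ, ((k.factorial : ℂ))⁻¹ • (M ^ k).mulVec u := by
  letI : SeminormedRing (Matrix (Fin d) (Fin d) ℂ) := Matrix.linftyOpSemiNormedRing
  letI : NormedRing (Matrix (Fin d) (Fin d) ℂ) := Matrix.linftyOpNormedRing
  letI : NormedAlgebra ℂ (Matrix (Fin d) (Fin d) ℂ) := Matrix.linftyOpNormedAlgebra
  have hc : Continuous (mulVecL u) := (mulVecL (d := d) u).continuous_of_finiteDimensional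
  have := ((matexp_summable M).hasSum.map (mulVecL u) hc).tsum_eq
  rw [matexp_eq_tsum]
  simpa [mulVecL, Function.comp] using this.symm

lemma matexp_mulVec_fin (M : Matrix (Fin d) (Fin d) ℂ) (u : Fin d → ℂ) (N : ℕ)
    (h : (M ^ N).mulVec u = 0) :
    (exp M).mulVec u
      = ∑ k ∈ Finset.range N, ((k.factorial : ℂ))⁻¹ • (M ^ k).mulVec u := by
  rw [matexp_mulVec]
  refine tsum_eq_sum ?_
  intro k hk
  have hkN : N ≤ k := Nat.le_of_not_lt (by simpa using hk)
  have : M ^ k = M ^ (k - N) * M ^ N := by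
    rw [← pow_add]; congr 1; omega
  rw [this, ← Matrix.mulVec_mulVec, h, Matrix.mulVec_zero, smul_zero]

lemma matexp_scalar (c : ℂ) :
    exp (c • (1 : Matrix (Fin d) (Fin d) ℂ)) = Complex.exp c • 1 := by
  rw [Matrix.smul_one_eq_diagonal, Matrix.exp_diagonal, Matrix.smul_one_eq_diagonal]
  rw [Pi.exp_def, ← Complex.exp_eq_exp_ℂ]

lemma matexp_split (c : ℂ) (M : Matrix (Fin d) (Fin d) ℂ) :
    exp (c • (1 : Matrix (Fin d) (Fin d) ℂ) + M)
      = Complex.exp c • exp M := by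
  have hcomm : Commute (c • (1 : Matrix (Fin d) (Fin d) ℂ)) M := by
    simp [Commute, SemiconjBy, smul_one_mul, mul_smul_one]
  rw [Matrix.exp_add_of_commute _ _ hcomm, matexp_scalar, smul_mul_assoc, one_mul]

lemma matexp_mulVec_ne_zero (M : Matrix (Fin d) (Fin d) ℂ) {u : Fin d → ℂ} (hu : u ≠ 0) :
    (exp M).mulVec u ≠ 0 := by
  intro h
  have h1 : exp (-M) * exp M = 1 := by
    rw [← Matrix.exp_add_of_commute (-M) M (Commute.neg_left rfl), neg_add_cancel,
      exp_zero]
  apply hu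
  calc u = ((exp (-M) * exp M)).mulVec u := by rw [h1, Matrix.one_mulVec]
  _ = (exp (-M)).mulVec ((exp M).mulVec u) := (Matrix.mulVec_mulVec _ _ _).symm
  _ = 0 := by rw [h, Matrix.mulVec_zero]

lemma finrank_ker_transpose (P : Matrix (Fin d) (Fin d) ℂ) :
    Module.finrank ℂ (LinearMap.ker Pᵀ.mulVecLin)
      = Module.finrank ℂ (LinearMap.ker P.mulVecLin) := by
  have h1 := LinearMap.finrank_range_add_finrank_ker (Pᵀ.mulVecLin)
  have h2 := LinearMap.finrank_range_add_finrank_ker (P.mulVecLin)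
  have h3 : Pᵀ.rank = P.rank := Matrix.rank_transpose P
  unfold Matrix.rank at h3
  rw [Module.finrank_fin_fun] at h1 h2
  omega


/-- The complexification of a real matrix. -/
noncomputable def cplxMat {d : ℕ} (B : Matrix (Fin d) (Fin d) ℝ) :
    Matrix (Fin d) (Fin d) ℂ :=
  B.map (algebraMap ℝ ℂ)

/-- The complexification of a real matrix as an endomorphism of `ℂ^d`. -/
noncomputable def cplxEnd {d : ℕ} (B : Matrix (Fin d) (Fin d) ℝ) :
    Module.End ℂ (Fin d → ℂ) :=
  Matrix.toLin' (cplxMat B)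
lemma exists_gen_eigvec (B : Matrix (Fin d) (Fin d) ℝ) (lam : ℂ) (N : ℕ) (hN : 1 ≤ N)
    (h : (cplxEnd B).genEigenspace lam (N : ℕ∞)
        ≠ (cplxEnd B).genEigenspace lam ((N - 1 : ℕ) : ℕ∞)) :
    ∃ u : Fin d → ℂ,
      ((((cplxMat B)ᵀ - lam • 1) ^ N).mulVec u = 0) ∧
      ((((cplxMat B)ᵀ - lam • 1) ^ (N - 1)).mulVec u ≠ 0) := by
  set A := cplxMat B with hA
  have e0 : ∀ P : Matrix (Fin d) (Fin d) ℂ, Matrix.toLinAlgEquiv' P = P.mulVecLin := by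
    intro P; ext v
    simp [Matrix.toLinAlgEquiv'_apply, Matrix.mulVecLin_apply]
  have e1 : cplxEnd B - lam • (1 : Module.End ℂ (Fin d → ℂ))
      = Matrix.toLinAlgEquiv' (A - lam • 1) := by
    rw [map_sub, _root_.map_smul, map_one]
    congr 1
  have key : ∀ k : ℕ, (cplxEnd B).genEigenspace lam (k : ℕ∞)
      = LinearMap.ker ((A - lam • 1) ^ k).mulVecLin := by
    intro k
    rw [Module.End.genEigenspace_nat, e1, ← map_pow, e0]
  -- inclusion of kernels, generic
  have incl : ∀ P : Matrix (Fin d) (Fin d) ℂ, ∀ k : ℕ,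
      LinearMap.ker (P ^ (N - 1)).mulVecLin ≤ LinearMap.ker (P ^ N).mulVecLin := by
    intro P k
    intro v hv
    simp only [LinearMap.mem_ker, Matrix.mulVecLin_apply] at hv ⊢
    have : P ^ N = P ^ (N - (N-1)) * P ^ (N - 1) := by rw [← pow_add]; congr 1; omega
    rw [this, ← Matrix.mulVec_mulVec, hv, Matrix.mulVec_zero]
  -- strict inequality of finranks for A
  have hlt : Module.finrank ℂ (LinearMap.ker ((A - lam • 1) ^ (N-1)).mulVecLin)
      < Module.finrank ℂ (LinearMap.ker ((A - lam • 1) ^ N).mulVecLin) := by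
    refine Submodule.finrank_lt_finrank_of_lt (lt_of_le_of_ne (incl _ 0) ?_)
    intro hEq
    apply h
    rw [key, key, hEq]
  -- transfer to transpose
  have htr : ∀ k : ℕ, ((A - lam • 1) ^ k)ᵀ = (Aᵀ - lam • 1) ^ k := by
    intro k
    rw [Matrix.transpose_pow, Matrix.transpose_sub, Matrix.transpose_smul,
      Matrix.transpose_one]
  have hlt' : Module.finrank ℂ (LinearMap.ker ((Aᵀ - lam • 1) ^ (N-1)).mulVecLin)
      < Module.finrank ℂ (LinearMap.ker ((Aᵀ - lam • 1) ^ N).mulVecLin) := by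
    rw [← htr, ← htr, finrank_ker_transpose, finrank_ker_transpose]
    exact hlt
  have hne : ¬ (LinearMap.ker ((Aᵀ - lam • 1) ^ N).mulVecLin
      ≤ LinearMap.ker ((Aᵀ - lam • 1) ^ (N-1)).mulVecLin) := by
    intro hle
    exact absurd (Submodule.finrank_mono hle) (by omega)
  obtain ⟨u, hu1, hu2⟩ := SetLike.not_le_iff_exists.mp hne
  exact ⟨u, by simpa using hu1, by simpa using hu2⟩


section Quad
variable (μ : Measure (Fin d → ℝ)) [IsProbabilityMeasure μ]

lemma integ_aux (hmom : Integrable (fun x => ‖x‖ ^ 2) μ) (w : Fin d → ℝ) :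
    Integrable (fun x : Fin d → ℝ => (∑ i, x i * w i) ^ 2) μ := by
  have hb : ∀ x : Fin d → ℝ, ‖(∑ i, x i * w i) ^ 2‖ ≤ (d^2 * ‖w‖^2) * ‖x‖^2 := by
    intro x
    have h1 : |∑ i, x i * w i| ≤ d * (‖x‖ * ‖w‖) := by
      calc |∑ i, x i * w i| ≤ ∑ i, |x i * w i| := Finset.abs_sum_le_sum_abs _ _
      _ ≤ ∑ _i : Fin d, ‖x‖ * ‖w‖ := by
          refine Finset.sum_le_sum fun i _ => ?_
          rw [abs_mul]
          exact mul_le_mul (by simpa using norm_le_pi_norm x i)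
            (by simpa using norm_le_pi_norm w i) (abs_nonneg _) (norm_nonneg _)
      _ = d * (‖x‖ * ‖w‖) := by simp [Finset.sum_const, mul_comm]
    calc ‖(∑ i, x i * w i) ^ 2‖ = |∑ i, x i * w i| ^ 2 := by
          rw [Real.norm_eq_abs, ← abs_pow]
    _ ≤ (d * (‖x‖ * ‖w‖)) ^ 2 := by
          exact pow_le_pow_left₀ (abs_nonneg _) h1 2
    _ = (d^2 * ‖w‖^2) * ‖x‖^2 := by ring
  refine Integrable.mono' (hmom.const_mul (d^2 * ‖w‖^2)) ?_ (Filter.Eventually.of_forall hb)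
  exact (Continuous.aestronglyMeasurable (by fun_prop))

set_option linter.unusedSectionVars false

lemma q_scale (hmom : Integrable (fun x => ‖x‖ ^ 2) μ) (c : ℝ) (w : Fin d → ℝ) :
    (∫ x, (∑ i, x i * (c • w) i) ^ 2 ∂μ) = c^2 * ∫ x, (∑ i, x i * w i) ^ 2 ∂μ := by
  rw [← integral_const_mul]
  congr 1
  funext x
  simp only [Pi.smul_apply, smul_eq_mul]
  rw [show (∑ i, x i * (c * w i)) = c * ∑ i, x i * w i from by
    rw [Finset.mul_sum]; congr 1; funext i; ring]
  ring

lemma q_pos (hmom : Integrable (fun x => ‖x‖ ^ 2) μ)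
    (hplane : ∀ v : Fin d → ℝ, v ≠ 0 → μ {x | ∑ i, v i * x i = 0} < 1)
    (w : Fin d → ℝ) (hw : w ≠ 0) :
    0 < ∫ x, (∑ i, x i * w i) ^ 2 ∂μ := by
  rw [integral_pos_iff_support_of_nonneg (fun x => sq_nonneg _) (integ_aux μ hmom w)]
  have hset : Function.support (fun x : Fin d → ℝ => (∑ i, x i * w i) ^ 2)
      = {x | ∑ i, w i * x i = 0}ᶜ := by
    ext x
    simp only [Function.mem_support, Set.mem_compl_iff, Set.mem_setOf_eq]
    constructor
    · intro h h2
      exact h (by rw [show (∑ i, x i * w i) = ∑ i, w i * x i from by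
        congr 1; funext i; ring, h2]; ring)
    · intro h h2
      exact h (by rw [show (∑ i, w i * x i) = ∑ i, x i * w i from by
        congr 1; funext i; ring]; exact pow_eq_zero_iff (by norm_num) |>.mp h2)
  rw [hset]
  have hms : MeasurableSet {x : Fin d → ℝ | ∑ i, w i * x i = 0} := by
    have : IsClosed {x : Fin d → ℝ | ∑ i, w i * x i = 0} :=
      isClosed_eq (by fun_prop) continuous_const
    exact this.measurableSet
  rw [prob_compl_eq_one_sub hms]
  exact tsub_pos_of_lt (hplane w hw)

lemma xixj_int (hmom : Integrable (fun x => ‖x‖ ^ 2) μ) (i j : Fin d) :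
    Integrable (fun x : Fin d → ℝ => x i * x j) μ := by
  refine Integrable.mono' hmom (Continuous.aestronglyMeasurable (by fun_prop)) ?_
  refine Filter.Eventually.of_forall fun x => ?_
  rw [Real.norm_eq_abs, abs_mul]
  calc |x i| * |x j| ≤ ‖x‖ * ‖x‖ :=
        mul_le_mul (by simpa using norm_le_pi_norm x i) (by simpa using norm_le_pi_norm x j)
          (abs_nonneg _) (norm_nonneg _)
  _ = ‖x‖ ^ 2 := (sq ‖x‖).symm

lemma q_cont (hmom : Integrable (fun x => ‖x‖ ^ 2) μ) :
    Continuous (fun w : Fin d → ℝ => ∫ x, (∑ i, x i * w i) ^ 2 ∂μ) := by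
  have hq : (fun w : Fin d → ℝ => ∫ x, (∑ i, x i * w i) ^ 2 ∂μ)
      = fun w => ∑ i, ∑ j, (∫ x, x i * x j ∂μ) * (w i * w j) := by
    funext w
    have h1 : ∀ x : Fin d → ℝ, (∑ i, x i * w i) ^ 2
        = ∑ i, ∑ j, (x i * x j) * (w i * w j) := by
      intro x
      rw [sq, Finset.sum_mul_sum]
      congr 1; funext i; congr 1; funext j; ring
    simp_rw [h1]
    rw [integral_finset_sum _ (fun i _ => integrable_finset_sum _
      (fun j _ => ((xixj_int μ hmom i j).mul_const _)))]
    congr 1; funext i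
    rw [integral_finset_sum _ (fun j _ => ((xixj_int μ hmom i j).mul_const _))]
    congr 1; funext j
    exact integral_mul_const _ _
  rw [hq]
  fun_prop

lemma quad_lower_real (hmom : Integrable (fun x => ‖x‖ ^ 2) μ)
    (hplane : ∀ v : Fin d → ℝ, v ≠ 0 → μ {x | ∑ i, v i * x i = 0} < 1)
    (hd : Nonempty (Fin d)) :
    ∃ m > 0, ∀ w : Fin d → ℝ, m * ‖w‖ ^ 2 ≤ ∫ x, (∑ i, x i * w i) ^ 2 ∂μ := by
  haveI : Nontrivial (Fin d → ℝ) := Function.nontrivial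
  have hne : (Metric.sphere (0 : Fin d → ℝ) 1).Nonempty :=
    NormedSpace.sphere_nonempty.mpr zero_le_one
  obtain ⟨w₀, hw₀s, hmin⟩ := (isCompact_sphere (0 : Fin d → ℝ) 1).exists_isMinOn hne
    ((q_cont μ hmom).continuousOn)
  have hw₀ : w₀ ≠ 0 := by
    intro h
    have := mem_sphere_zero_iff_norm.mp hw₀s
    rw [h, norm_zero] at this; norm_num at this
  set m := ∫ x, (∑ i, x i * w₀ i) ^ 2 ∂μ with hm
  refine ⟨m, q_pos μ hmom hplane w₀ hw₀, fun w => ?_⟩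
  rcases eq_or_ne w 0 with rfl | hw
  · simp
  · have hnorm : ‖(‖w‖⁻¹ : ℝ) • w‖ = 1 := norm_smul_inv_norm hw
    have hmem : (‖w‖⁻¹ : ℝ) • w ∈ Metric.sphere (0 : Fin d → ℝ) 1 :=
      mem_sphere_zero_iff_norm.mpr hnorm
    have h1 : m ≤ ∫ x, (∑ i, x i * ((‖w‖⁻¹ : ℝ) • w) i) ^ 2 ∂μ := hmin hmem
    have h2 := q_scale μ hmom (‖w‖⁻¹) w
    rw [h2] at h1
    have hn : (0:ℝ) < ‖w‖ := norm_pos_iff.mpr hw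
    calc m * ‖w‖ ^ 2 ≤ ((‖w‖⁻¹)^2 * ∫ x, (∑ i, x i * w i) ^ 2 ∂μ) * ‖w‖ ^ 2 := by
          exact mul_le_mul_of_nonneg_right h1 (sq_nonneg _)
    _ = ∫ x, (∑ i, x i * w i) ^ 2 ∂μ := by
          field_simp

lemma quad_lower (hmom : Integrable (fun x => ‖x‖ ^ 2) μ)
    (hplane : ∀ v : Fin d → ℝ, v ≠ 0 → μ {x | ∑ i, v i * x i = 0} < 1)
    (hd : Nonempty (Fin d)) :
    ∃ m > 0, ∀ v : Fin d → ℂ,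
      m * ‖v‖ ^ 2 ≤ ∫ x, ‖∑ i, (x i : ℂ) * v i‖ ^ 2 ∂μ := by
  obtain ⟨m, hm, hq⟩ := quad_lower_real μ hmom hplane hd
  refine ⟨m, hm, fun v => ?_⟩
  set vr : Fin d → ℝ := fun i => (v i).re with hvr
  set vi : Fin d → ℝ := fun i => (v i).im with hvi
  have hpt : ∀ x : Fin d → ℝ, ‖∑ i, (x i : ℂ) * v i‖ ^ 2
      = (∑ i, x i * vr i) ^ 2 + (∑ i, x i * vi i) ^ 2 := by
    intro x
    rw [Complex.sq_norm, Complex.normSq_apply]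
    have hre : (∑ i, (x i : ℂ) * v i).re = ∑ i, x i * vr i := by
      rw [Complex.re_sum]
      exact Finset.sum_congr rfl fun i _ => by simp [Complex.mul_re, hvr]
    have him : (∑ i, (x i : ℂ) * v i).im = ∑ i, x i * vi i := by
      rw [Complex.im_sum]
      exact Finset.sum_congr rfl fun i _ => by simp [Complex.mul_im, hvi]
    rw [hre, him]; ring
  have hsplit : (∫ x, ‖∑ i, (x i : ℂ) * v i‖ ^ 2 ∂μ)
      = (∫ x, (∑ i, x i * vr i) ^ 2 ∂μ) + ∫ x, (∑ i, x i * vi i) ^ 2 ∂μ := by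
    simp_rw [hpt]
    exact integral_add (integ_aux μ hmom vr) (integ_aux μ hmom vi)
  have hnv : ‖v‖ ^ 2 ≤ ‖vr‖ ^ 2 + ‖vi‖ ^ 2 := by
    have h1 : ‖v‖ ≤ Real.sqrt (‖vr‖ ^ 2 + ‖vi‖ ^ 2) := by
      refine (pi_norm_le_iff_of_nonneg (Real.sqrt_nonneg _)).mpr fun i => ?_
      rw [← Real.sqrt_sq (norm_nonneg (v i))]
      refine Real.sqrt_le_sqrt ?_
      rw [Complex.sq_norm, Complex.normSq_apply]
      have h2 : (v i).re * (v i).re ≤ ‖vr‖ ^ 2 := by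
        rw [← sq]
        calc (v i).re ^ 2 = ‖vr i‖ ^ 2 := by simp [hvr, sq_abs]
        _ ≤ ‖vr‖ ^ 2 := pow_le_pow_left₀ (norm_nonneg _) (norm_le_pi_norm vr i) 2
      have h3 : (v i).im * (v i).im ≤ ‖vi‖ ^ 2 := by
        rw [← sq]
        calc (v i).im ^ 2 = ‖vi i‖ ^ 2 := by simp [hvi, sq_abs]
        _ ≤ ‖vi‖ ^ 2 := pow_le_pow_left₀ (norm_nonneg _) (norm_le_pi_norm vi i) 2
      linarith
    calc ‖v‖ ^ 2 ≤ Real.sqrt (‖vr‖ ^ 2 + ‖vi‖ ^ 2) ^ 2 :=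
          pow_le_pow_left₀ (norm_nonneg _) h1 2
    _ = ‖vr‖ ^ 2 + ‖vi‖ ^ 2 := Real.sq_sqrt (by positivity)
  rw [hsplit]
  calc m * ‖v‖ ^ 2 ≤ m * (‖vr‖ ^ 2 + ‖vi‖ ^ 2) :=
        mul_le_mul_of_nonneg_left hnv hm.le
  _ = m * ‖vr‖ ^ 2 + m * ‖vi‖ ^ 2 := by ring
  _ ≤ _ := add_le_add (hq vr) (hq vi)


lemma poly_lower (N : ℕ) (hN : 1 ≤ N) (uk : ℕ → Fin d → ℂ)
    (hne : ∀ t : ℝ, 0 ≤ t →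
      (∑ k ∈ Finset.range N, ((-(t:ℂ))^k * (k.factorial : ℂ)⁻¹) • uk k) ≠ 0)
    (hlast : uk (N-1) ≠ 0) :
    ∃ c > 0, ∀ t : ℝ, 0 ≤ t →
      c * (1 + t ^ (2*(N-1)))
        ≤ ‖∑ k ∈ Finset.range N, ((-(t:ℂ))^k * (k.factorial:ℂ)⁻¹) • uk k‖ ^ 2 := by
  set n := N - 1 with hn
  have hNn : N = n + 1 := by omega
  set p : ℝ → (Fin d → ℂ) :=
    fun t => ∑ k ∈ Finset.range N, ((-(t:ℂ))^k * (k.factorial:ℂ)⁻¹) • uk k with hp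
  have hpc : Continuous p := by
    refine continuous_finset_sum _ fun k _ => ?_
    exact Continuous.smul (by fun_prop : Continuous fun t : ℝ => ((-(t:ℂ))^k * (k.factorial:ℂ)⁻¹)) continuous_const
  set a : ℝ := ‖uk n‖ with ha
  have ha0 : 0 < a := norm_pos_iff.mpr hlast
  set b : ℝ := ∑ k ∈ Finset.range n, ‖uk k‖ with hb
  have hb0 : 0 ≤ b := Finset.sum_nonneg fun k _ => norm_nonneg _
  set T : ℝ := max 1 (2 * b * (n.factorial) / a) with hT
  have hT1 : (1:ℝ) ≤ T := le_max_left _ _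
  have hT0 : (0:ℝ) ≤ T := by linarith
  set a2 : ℝ := a / (2 * n.factorial) with ha2
  have hnf : (0:ℝ) < n.factorial := by exact_mod_cast n.factorial_pos
  have ha20 : 0 < a2 := by positivity
  -- large t bound
  have hlarge : ∀ t : ℝ, T ≤ t → a2^2/2 * (1 + t ^ (2*n)) ≤ ‖p t‖ ^ 2 := by
    intro t ht
    have ht1 : (1:ℝ) ≤ t := le_trans hT1 ht
    have ht0 : (0:ℝ) ≤ t := by linarith
    have hnorm_term : ∀ k, ‖((-(t:ℂ))^k * (k.factorial:ℂ)⁻¹) • uk k‖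
        = t^k * ((k.factorial:ℝ))⁻¹ * ‖uk k‖ := by
      intro k
      rw [norm_smul, norm_mul, norm_pow, norm_neg, norm_inv]
      push_cast
      simp [Complex.norm_real, abs_of_nonneg ht0, Complex.norm_natCast]
    set S := ∑ k ∈ Finset.range n, ((-(t:ℂ))^k * (k.factorial:ℂ)⁻¹) • uk k with hS
    set L := ((-(t:ℂ))^n * (n.factorial:ℂ)⁻¹) • uk n with hL
    have hsplit : p t = S + L := by
      simp only [hp, hS, hL, hNn, Finset.sum_range_succ]
    have htri : ‖L‖ - ‖S‖ ≤ ‖p t‖ := by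
      have h := norm_sub_le (S + L) S
      simp only [add_sub_cancel_left] at h
      rw [hsplit]; linarith
    have hLval : ‖L‖ = t^n * ((n.factorial:ℝ))⁻¹ * a := by rw [hL, hnorm_term]
    have hSbound : ‖S‖ ≤ t^(n-1) * b := by
      calc ‖S‖ ≤ ∑ k ∈ Finset.range n, ‖((-(t:ℂ))^k * (k.factorial:ℂ)⁻¹) • uk k‖ :=
            norm_sum_le _ _
      _ ≤ ∑ k ∈ Finset.range n, t^(n-1) * ‖uk k‖ := by
            refine Finset.sum_le_sum fun k hk => ?_
            rw [hnorm_term]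
            have h1 : t^k ≤ t^(n-1) :=
              pow_le_pow_right₀ ht1 (by have := Finset.mem_range.mp hk; omega)
            have h2 : ((k.factorial:ℝ))⁻¹ ≤ 1 := by
              rw [inv_le_one_iff₀]; right; exact_mod_cast k.factorial_pos
            calc t^k * ((k.factorial:ℝ))⁻¹ * ‖uk k‖
                ≤ t^(n-1) * 1 * ‖uk k‖ := by
                  refine mul_le_mul_of_nonneg_right ?_ (norm_nonneg _)
                  exact mul_le_mul h1 h2 (by positivity) (by positivity)
            _ = t^(n-1) * ‖uk k‖ := by ring
      _ = t^(n-1) * b := by rw [hb, Finset.mul_sum]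
    have hSb2 : t^(n-1) * b ≤ t^n * a2 := by
      rcases Nat.eq_zero_or_pos n with h0 | hpos
      · have : b = 0 := by rw [hb, h0]; simp
        rw [this, mul_zero]; positivity
      · have hTle : 2 * b * (n.factorial) / a ≤ t := le_trans (le_max_right _ _) ht
        have htn : t^n = t^(n-1) * t := by
          conv_lhs => rw [show n = (n-1) + 1 by omega]
          rw [pow_succ]
        rw [htn, mul_assoc, ha2]
        refine mul_le_mul_of_nonneg_left ?_ (by positivity)
        rw [div_le_iff₀ ha0] at hTle
        have h4 : 0 < (2 * (n.factorial:ℝ)) := by positivity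
        rw [mul_comm t (a / (2 * ↑n.factorial)), div_mul_eq_mul_div, le_div_iff₀ h4]
        nlinarith
    have hfinal : t^n * a2 ≤ ‖p t‖ := by
      have : t^n * ((n.factorial:ℝ))⁻¹ * a - t^n * a2 = t^n * a2 := by
        rw [ha2]; field_simp; ring
      calc t^n * a2 = t^n * ((n.factorial:ℝ))⁻¹ * a - t^n * a2 := this.symm
      _ ≤ ‖L‖ - ‖S‖ := by rw [hLval]; exact sub_le_sub_left (le_trans hSbound hSb2) _
      _ ≤ ‖p t‖ := htri
    have hsq : (t^n * a2)^2 ≤ ‖p t‖^2 := pow_le_pow_left₀ (by positivity) hfinal 2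
    have ht2n : (1:ℝ) ≤ t^(2*n) := one_le_pow₀ ht1
    calc a2^2/2 * (1 + t ^ (2*n)) ≤ a2^2/2 * (t^(2*n) + t^(2*n)) := by
          refine mul_le_mul_of_nonneg_left (by linarith) (by positivity)
    _ = t^(2*n) * a2^2 := by ring
    _ = (t^n * a2)^2 := by rw [mul_pow, ← pow_mul, mul_comm 2 n]
    _ ≤ ‖p t‖^2 := hsq
  -- small t: min on Icc 0 T
  have hcf : ContinuousOn (fun t => ‖p t‖^2) (Set.Icc 0 T) :=
    ((hpc.norm.pow 2)).continuousOn
  obtain ⟨t₁, ht₁mem, hmin⟩ := (isCompact_Icc (a := (0:ℝ)) (b := T)).exists_isMinOn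
    (Set.nonempty_Icc.mpr hT0) hcf
  have hm1 : 0 < ‖p t₁‖^2 := by
    have hne1 : p t₁ ≠ 0 := hne t₁ ht₁mem.1
    have : 0 < ‖p t₁‖ := norm_pos_iff.mpr hne1
    positivity
  set m₁ := ‖p t₁‖^2 with hm₁
  have hTden : 0 < 1 + T^(2*n) := by positivity
  set c := min (a2^2/2) (m₁ / (1 + T^(2*n))) with hc
  have hc0 : 0 < c := lt_min (by positivity) (by positivity)
  refine ⟨c, hc0, fun t ht0 => ?_⟩
  rcases le_total t T with hle | hge
  · have h1 : 1 + t^(2*n) ≤ 1 + T^(2*n) := by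
      have := pow_le_pow_left₀ ht0 hle (2*n); linarith
    have h2 : (0:ℝ) ≤ 1 + t^(2*n) := by positivity
    calc c * (1 + t^(2*n)) ≤ (m₁/(1+T^(2*n))) * (1 + T^(2*n)) :=
          mul_le_mul (min_le_right _ _) h1 h2 (by positivity)
    _ = m₁ := div_mul_cancel₀ _ (ne_of_gt hTden)
    _ ≤ ‖p t‖^2 := isMinOn_iff.mp hmin t ⟨ht0, hle⟩
  · calc c * (1+t^(2*n)) ≤ a2^2/2 * (1 + t^(2*n)) :=
          mul_le_mul_of_nonneg_right (min_le_left _ _) (by positivity)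
    _ ≤ ‖p t‖^2 := hlarge t hge

/-- Let `B` have all eigenvalues with real part `≥ ρ`, with some
eigenvalue `λ`, `Re λ = ρ`, having a Jordan block of size `N`.  If `μ` is a probability
measure on `ℝ^d` with finite nonzero second moment, not concentrated on any hyperplane,
then there are `c > 0` and a vector `u` with
`∫ |xᵀ e^{−tBᵀ} u|² dμ(x) ≥ (1/c)(1 + t^{2(N−1)}) e^{−2ρt}` for all `t ≥ 0`. -/
theorem stmt12 {d : ℕ} (B : Matrix (Fin d) (Fin d) ℝ) (ρ : ℝ) (N : ℕ) (hN : 1 ≤ N)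
    (hre : ∀ lam : ℂ, (cplxEnd B).HasEigenvalue lam → ρ ≤ lam.re)
    (hJordan : ∃ lam : ℂ, lam.re = ρ ∧
      (cplxEnd B).genEigenspace lam (N : ℕ∞)
        ≠ (cplxEnd B).genEigenspace lam ((N - 1 : ℕ) : ℕ∞))
    (μ : Measure (Fin d → ℝ)) [IsProbabilityMeasure μ]
    (hmom : Integrable (fun x => ‖x‖ ^ 2) μ)
    (hmom0 : 0 < ∫ x, ‖x‖ ^ 2 ∂μ)
    (hplane : ∀ v : Fin d → ℝ, v ≠ 0 → μ {x | ∑ i, v i * x i = 0} < 1) :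
    ∃ c > 0, ∃ u : Fin d → ℂ, ∀ t : ℝ, 0 ≤ t →
      (1 / c) * (1 + t ^ (2 * (N - 1))) * Real.exp (-2 * ρ * t)
        ≤ ∫ x, ‖∑ i, (x i : ℂ)
            * (exp (-(t • (cplxMat B).transpose))).mulVec u i‖ ^ 2 ∂μ := by
  obtain ⟨lam, hlamre, hJ⟩ := hJordan
  obtain ⟨u, hu0, hu1⟩ := exists_gen_eigvec B lam N hN hJ
  set L : Matrix (Fin d) (Fin d) ℂ := (cplxMat B)ᵀ - lam • 1 with hLdef
  set uk : ℕ → Fin d → ℂ := fun k => (L ^ k).mulVec u with huk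
  have huNe : u ≠ 0 := by
    intro h
    exact hu1 (by rw [h, Matrix.mulVec_zero])
  have hd : Nonempty (Fin d) := by
    by_contra h
    exact huNe (funext fun i => (h ⟨i⟩).elim)
  obtain ⟨m, hm0, hquad⟩ := quad_lower μ hmom hplane hd
  have hexp : ∀ t : ℝ, (exp (-(t • (cplxMat B)ᵀ))).mulVec u
      = Complex.exp (-(t * lam))
        • ∑ k ∈ Finset.range N, ((-(t:ℂ))^k * (k.factorial:ℂ)⁻¹) • uk k := by
    intro t
    have h0 : t • (cplxMat B)ᵀ = (t : ℂ) • (cplxMat B)ᵀ := by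
      rw [← algebraMap_smul ℂ t ((cplxMat B)ᵀ)]
      norm_num
    have hmat : -(t • (cplxMat B)ᵀ)
        = (-((t:ℂ) * lam)) • (1 : Matrix (Fin d) (Fin d) ℂ) + (-(t:ℂ)) • L := by
      rw [h0, hLdef]
      module
    have hzero : (((-(t:ℂ)) • L) ^ N).mulVec u = 0 := by
      rw [smul_pow, Matrix.smul_mulVec, hu0, smul_zero]
    rw [hmat, matexp_split, Matrix.smul_mulVec, matexp_mulVec_fin _ _ N hzero]
    have : -((t:ℂ) * lam) = -(↑t * lam) := rfl
    rw [this]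
    congr 1
    refine Finset.sum_congr rfl fun k _ => ?_
    rw [smul_pow, Matrix.smul_mulVec, smul_smul, mul_comm]
  have hne' : ∀ t : ℝ, 0 ≤ t →
      (∑ k ∈ Finset.range N, ((-(t:ℂ))^k * (k.factorial:ℂ)⁻¹) • uk k) ≠ 0 := by
    intro t _ h
    have h2 := matexp_mulVec_ne_zero (-(t • (cplxMat B)ᵀ)) huNe
    rw [hexp t, h, smul_zero] at h2
    exact h2 rfl
  obtain ⟨c', hc'0, hpoly⟩ := poly_lower N hN uk hne' hu1
  refine ⟨(m * c')⁻¹, by positivity, u, fun t ht => ?_⟩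
  rw [one_div, inv_inv]
  set pt := ∑ k ∈ Finset.range N, ((-(t:ℂ))^k * (k.factorial:ℂ)⁻¹) • uk k with hpt
  have h1 : c' * (1 + t ^ (2 * (N-1))) ≤ ‖pt‖ ^ 2 := hpoly t ht
  have h2 : ‖(exp (-(t • (cplxMat B)ᵀ))).mulVec u‖ ^ 2
      = Real.exp (-2 * ρ * t) * ‖pt‖ ^ 2 := by
    rw [hexp t, norm_smul, mul_pow]
    congr 1
    rw [Complex.norm_exp]
    have : (-(↑t * lam)).re = -(t * ρ) := by
      simp [Complex.mul_re, hlamre]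
    rw [this, sq, ← Real.exp_add]
    ring_nf
  have h3 := hquad ((exp (-(t • (cplxMat B)ᵀ))).mulVec u)
  calc m * c' * (1 + t ^ (2 * (N - 1))) * Real.exp (-2 * ρ * t)
      = m * (Real.exp (-2 * ρ * t) * (c' * (1 + t ^ (2 * (N-1))))) := by ring
  _ ≤ m * (Real.exp (-2 * ρ * t) * ‖pt‖ ^ 2) := by
      refine mul_le_mul_of_nonneg_left (mul_le_mul_of_nonneg_left h1 (Real.exp_nonneg _))
        hm0.le
  _ = m * ‖(exp (-(t • (cplxMat B)ᵀ))).mulVec u‖ ^ 2 := by rw [h2]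
  _ ≤ _ := h3
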